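/- arXiv:2102.11927 — 2 statements merged into one kernel-verified Lean document; each statement's English description precedes it below -/
import Mathlib

section
/- For the logistic map f(x) = μx(1−x) with μ > 4, the set Λ of points whose full forward orbit remains in [0,1] has empty interior when μ > 2 + √5 (in fact for the statement take μ ≥ 2 + √5): for every nonempty open subinterval of [0,1] there exists a point whose orbit eventually leaves [0,1]. -/
set_option maxHeartbeats 1000000 in
theorem logistic_invariant_set_empty_interior (μ : ℝ) (hμ : 2 + Real.sqrt 5 ≤ μ) :
    ∀ a b : ℝ, a < b → Set.Ioo a b ⊆ Set.Icc (0 : ℝ) 1 →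
      ∃ x ∈ Set.Ioo a b, ∃ n : ℕ,
        (fun y => μ * y * (1 - y))^[n] x ∉ Set.Icc (0 : ℝ) 1 := by
  intro a b hab hsub
  by_contra hcon
  push_neg at hcon
  set f : ℝ → ℝ := fun y => μ * y * (1 - y) with hfdef
  have hs5 : Real.sqrt 5 ^ 2 = 5 := Real.sq_sqrt (by norm_num)
  have hs5n : (0:ℝ) ≤ Real.sqrt 5 := Real.sqrt_nonneg 5
  have hμ4 : (4:ℝ) < μ := by nlinarith
  have hμ0 : (0:ℝ) < μ := by linarith
  have hμq : 0 ≤ μ^2 - 4*μ - 1 := by nlinarith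
  set r := Real.sqrt (1 - 4/μ) with hrdef
  have hrn : 0 ≤ r := Real.sqrt_nonneg _
  have hr2 : r^2 = 1 - 4/μ := Real.sq_sqrt (by
    rw [sub_nonneg, div_le_one hμ0]; linarith)
  have hr2' : μ * r^2 = μ - 4 := by
    rw [hr2]; field_simp
  have hμr : 1 ≤ μ * r := by nlinarith [sq_nonneg (μ*r - 1), sq_nonneg (μ*r)]
  have hcont : Continuous f := by
    apply Continuous.mul
    · exact continuous_const.mul continuous_id
    · exact continuous_const.sub continuous_id
  have hsplit : ∀ x : ℝ, 0 ≤ x → f x ≤ 1 → x ≤ (1-r)/2 ∨ (1+r)/2 ≤ x := by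
    intro x hx0 hfx
    by_contra h
    push_neg at h
    obtain ⟨h1, h2⟩ := h
    have hp : 0 < (x - (1-r)/2) * ((1+r)/2 - x) :=
      mul_pos (by linarith) (by linarith)
    simp only [hfdef] at hfx
    nlinarith [mul_pos hμ0 hp]
  set p := a + (b-a)/4 with hpdef
  set q := b - (b-a)/4 with hqdef
  set L := (b-a)/2 with hLdef
  have hL : 0 < L := by simp [hLdef]; linarith
  have hpq : q - p = L := by simp [hpdef, hqdef, hLdef]; ring
  have hiter : ∀ n : ℕ, f '' (f^[n] '' Set.Ioo a b) = f^[n+1] '' Set.Ioo a b := by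
    intro n
    rw [← Set.image_comp, ← Function.iterate_succ']
  have key : ∀ n : ℕ, ∃ u v : ℝ, L + n * (μ * L^2) ≤ v - u ∧
      Set.Icc u v ⊆ f^[n] '' Set.Ioo a b := by
    intro n
    induction n with
    | zero =>
      refine ⟨p, q, by simp [hpq], ?_⟩
      simp only [Function.iterate_zero, Set.image_id]
      intro x hx
      constructor
      · calc a < p := by simp [hpdef]; linarith
          _ ≤ x := hx.1
      · calc x ≤ q := hx.2
          _ < b := by simp [hqdef]; linarith
    | succ n ih =>
      obtain ⟨u, v, h1, h2⟩ := ih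
      have hδn : 0 ≤ (n:ℝ) * (μ * L^2) := by positivity
      have hℓ : L ≤ v - u := by linarith
      have huv : u < v := by linarith
      have horbit : ∀ x ∈ Set.Icc u v, ∀ m : ℕ, f^[m] x ∈ Set.Icc (0:ℝ) 1 := by
        intro x hx m
        obtain ⟨y, hy, hyx⟩ := h2 hx
        have := hcon y hy (m + n)
        rwa [Function.iterate_add_apply, hyx] at this
      have hmem : ∀ x ∈ Set.Icc u v, x ∈ Set.Icc (0:ℝ) 1 := by
        intro x hx
        simpa using horbit x hx 0
      have hf1 : ∀ x ∈ Set.Icc u v, f x ∈ Set.Icc (0:ℝ) 1 := by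
        intro x hx
        simpa using horbit x hx 1
      have humem := hmem u (Set.left_mem_Icc.mpr huv.le)
      have hvmem := hmem v (Set.right_mem_Icc.mpr huv.le)
      have hfu := hf1 u (Set.left_mem_Icc.mpr huv.le)
      have hfv := hf1 v (Set.right_mem_Icc.mpr huv.le)
      have hsubim : f '' Set.Icc u v ⊆ f^[n+1] '' Set.Ioo a b := by
        rw [← hiter n]
        exact Set.image_mono (f := f) h2
      rcases hsplit u humem.1 hfu.2 with hu | hu
      · rcases hsplit v hvmem.1 hfv.2 with hv | hv
        · -- both in left component: f increasing there
          refine ⟨f u, f v, ?_, ?_⟩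
          · have hfact : f v - f u = μ * (v - u) * ((1 - u - v)) := by
              simp only [hfdef]; ring
            have h1uv : r + (v - u) ≤ 1 - u - v := by linarith
            have hstep : (v - u) * (μ * r) + μ * (v-u) * (v-u) ≤ f v - f u := by
              rw [hfact]
              linarith [mul_nonneg (mul_nonneg hμ0.le (by linarith : (0:ℝ) ≤ v - u))
                (by linarith : (0:ℝ) ≤ 1 - u - v - (r + (v - u)))]
            have e1 : v - u ≤ (v - u) * (μ * r) :=
              le_mul_of_one_le_right (by linarith) hμr
            have e2 : μ * L^2 ≤ μ * (v-u) * (v-u) := by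
              calc μ * L^2 = μ * (L * L) := by ring
                _ ≤ μ * ((v-u) * (v-u)) :=
                  mul_le_mul_of_nonneg_left (mul_le_mul hℓ hℓ hL.le (by linarith)) hμ0.le
                _ = μ * (v-u) * (v-u) := by ring
            push_cast
            linarith
          · exact subset_trans (intermediate_value_Icc huv.le (hcont.continuousOn)) hsubim
        · -- u left, v right: 1/2 is inside and escapes
          exfalso
          have hhalf : (1:ℝ)/2 ∈ Set.Icc u v := by
            constructor <;> [linarith; linarith]
          have := (hf1 _ hhalf).2
          simp only [hfdef] at this
          nlinarith
      · -- both in right component: f decreasing there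
        have hvr : (1+r)/2 ≤ v := by linarith
        refine ⟨f v, f u, ?_, ?_⟩
        · have hfact : f u - f v = μ * (v - u) * ((u + v - 1)) := by
            simp only [hfdef]; ring
          have h1uv : r + (v - u) ≤ u + v - 1 := by linarith
          have hstep : (v - u) * (μ * r) + μ * (v-u) * (v-u) ≤ f u - f v := by
            rw [hfact]
            linarith [mul_nonneg (mul_nonneg hμ0.le (by linarith : (0:ℝ) ≤ v - u))
              (by linarith : (0:ℝ) ≤ u + v - 1 - (r + (v - u)))]
          have e1 : v - u ≤ (v - u) * (μ * r) :=
            le_mul_of_one_le_right (by linarith) hμr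
          have e2 : μ * L^2 ≤ μ * (v-u) * (v-u) := by
            calc μ * L^2 = μ * (L * L) := by ring
                _ ≤ μ * ((v-u) * (v-u)) :=
                  mul_le_mul_of_nonneg_left (mul_le_mul hℓ hℓ hL.le (by linarith)) hμ0.le
                _ = μ * (v-u) * (v-u) := by ring
          push_cast
          linarith
        · exact subset_trans (intermediate_value_Icc' huv.le (hcont.continuousOn)) hsubim
  have hδ : 0 < μ * L^2 := by positivity
  obtain ⟨n, hn⟩ := exists_nat_gt (1 / (μ * L^2))
  obtain ⟨u, v, h1, h2⟩ := key n
  have hδn : 0 ≤ (n:ℝ) * (μ * L^2) := by positivity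
  have huv : u ≤ v := by linarith
  have humem : u ∈ Set.Icc (0:ℝ) 1 := by
    obtain ⟨y, hy, hyx⟩ := h2 (Set.left_mem_Icc.mpr huv)
    rw [← hyx]; exact hcon y hy n
  have hvmem : v ∈ Set.Icc (0:ℝ) 1 := by
    obtain ⟨y, hy, hyx⟩ := h2 (Set.right_mem_Icc.mpr huv)
    rw [← hyx]; exact hcon y hy n
  have hgt : 1 < (n:ℝ) * (μ * L^2) := (div_lt_iff₀ hδ).mp hn
  have : v - u ≤ 1 := by linarith [humem.1, hvmem.2]
  linarith
end

section
/- One-step lower bound: if u₀ < U₁(q), then there exists a disturbance ξ with |ξ| ≤ ξ₀ such that for every control u with |u| ≤ u₀, the point f(q) + ξ + u lies in Q (escape fails). That is, U₁(q) is indeed the minimal control bound allowing guaranteed one-step escape. -/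
open Set Metric

/-- One-step escape function: minimal control bound to leave `Q` in one iteration. -/
noncomputable def escU1 (f : ℝ → ℝ) (Q : Set ℝ) (ξ0 : ℝ) (q : ℝ) : ℝ :=
  sSup ((fun ξ => Metric.infDist (f q + ξ) Qᶜ) '' Set.Icc (-ξ0) ξ0)

/-- The escape-function operator `T`. -/
noncomputable def escT (f : ℝ → ℝ) (Q : Set ℝ) (ξ0 : ℝ) (V : ℝ → ℝ) (q : ℝ) : ℝ :=
  sSup ((fun ξ => sInf ((fun r => max |f q + ξ - r| (V r)) '' Q)) '' Set.Icc (-ξ0) ξ0)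

/-- Case A escape functions: `escUA f Q ξ0 k = U_{k+1}` (escape in `k+1` or fewer iterations). -/
noncomputable def escUA (f : ℝ → ℝ) (Q : Set ℝ) (ξ0 : ℝ) : ℕ → ℝ → ℝ
  | 0 => escU1 f Q ξ0
  | k + 1 => fun q => min (escU1 f Q ξ0 q) (escT f Q ξ0 (escUA f Q ξ0 k) q)

/-- Case B escape functions: `escUB f Q ξ0 k = U_{k+1}` (escape in exactly `k+1` iterations). -/
noncomputable def escUB (f : ℝ → ℝ) (Q : Set ℝ) (ξ0 : ℝ) : ℕ → ℝ → ℝ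
  | 0 => escU1 f Q ξ0
  | k + 1 => escT f Q ξ0 (escUB f Q ξ0 k)

theorem escU1_one_step_lower_bound (f : ℝ → ℝ) (a b ξ0 u0 : ℝ) (hab : a ≤ b)
    (hξ : 0 < ξ0) (hu : 0 ≤ u0) (Q : Set ℝ) (hQ : Q = Set.Icc a b)
    (q : ℝ) (h : u0 < escU1 f Q ξ0 q) :
    ∃ ξ : ℝ, |ξ| ≤ ξ0 ∧ ∀ u : ℝ, |u| ≤ u0 → f q + ξ + u ∈ Q := by
  obtain ⟨x, hx, hxgt⟩ := exists_lt_of_lt_csSup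
    (Set.Nonempty.image _ (Set.nonempty_Icc.mpr (by linarith))) h
  obtain ⟨ξ, hξm, rfl⟩ := hx
  refine ⟨ξ, abs_le.mpr ⟨hξm.1, hξm.2⟩, fun u hu' => ?_⟩
  by_contra hmem
  have : Metric.infDist (f q + ξ) Qᶜ ≤ dist (f q + ξ) (f q + ξ + u) :=
    Metric.infDist_le_dist_of_mem hmem
  have hd : dist (f q + ξ) (f q + ξ + u) = |u| := by
    rw [Real.dist_eq]; simp [abs_sub_comm]
  simp only [hd] at this
  simp only at hxgt
  linarith
end
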